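/- For every ρ > 1, the limit of c_α^{(∞)}(ρ) as α → ∞ equals log ρ, where c_α^{(∞)}(ρ) := (1/(α−1))·log(1 + (1 + α(ρ−1) − ρ^α)/((1−α)(ρ−1))) − (α/(α−1))·log(1 + (1 + α(ρ−1) − ρ^α)/((1−α)(ρ^α−1))) for α ∈ (0,1)∪(1,∞). -/

import Mathlib

open Finset

/-- `P` is a probability mass function, strictly positive on `{1,…,n}`. -/
def IsPMF (n : ℕ) (P : ℕ → ℝ) : Prop :=
  (∀ i ∈ Finset.Icc 1 n, 0 < P i) ∧ ∑ i ∈ Finset.Icc 1 n, P i = 1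

/-- The ratio of the maximal to minimal mass of `P` on `{1,…,n}` is at most `ρ`. -/
def RatioBdd (n : ℕ) (ρ : ℝ) (P : ℕ → ℝ) : Prop :=
  ∀ i ∈ Finset.Icc 1 n, ∀ j ∈ Finset.Icc 1 n, P i ≤ ρ * P j

/-- `P` is nonincreasing on `{1,…,n}`. -/
def DecOn (n : ℕ) (P : ℕ → ℝ) : Prop :=
  ∀ i ∈ Finset.Icc 1 n, ∀ j ∈ Finset.Icc 1 n, i ≤ j → P j ≤ P i

/-- Sum of the `k` largest masses of `P` on `{1,…,n}`. -/
noncomputable def topSum (n : ℕ) (P : ℕ → ℝ) (k : ℕ) : ℝ :=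
  sSup ((fun s : Finset ℕ => ∑ i ∈ s, P i) '' {s | s ⊆ Finset.Icc 1 n ∧ s.card = k})

/-- `P ≺ Q`: `P` is majorized by `Q`, both viewed on `{1,…,n}`. -/
def MajorizedBy (n : ℕ) (P Q : ℕ → ℝ) : Prop :=
  ∀ k, 1 ≤ k → k ≤ n - 1 → topSum n P k ≤ topSum n Q k

/-- Zero-padding of a pmf on `{1,…,m}` outside of `{1,…,m}`. -/
def padTo (m : ℕ) (Q : ℕ → ℝ) : ℕ → ℝ := fun i => if i ≤ m then Q i else 0

/-- Rényi entropy of order `α` of `P` on `{1,…,n}` (Shannon entropy for `α = 1`);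
natural logarithms. -/
noncomputable def renyiH (n : ℕ) (α : ℝ) (P : ℕ → ℝ) : ℝ :=
  if α = 1 then -∑ i ∈ Finset.Icc 1 n, P i * Real.log (P i)
  else (1 - α)⁻¹ * Real.log (∑ i ∈ Finset.Icc 1 n, P i ^ α)

/-- `c_α^{(n)}(ρ) = log n − min_{P ∈ 𝒫_n(ρ)} H_α(P)` for `n ≥ 2`, and `0` for `n ≤ 1`. -/
noncomputable def cN (α ρ : ℝ) (n : ℕ) : ℝ :=
  if n ≤ 1 then 0
  else Real.log n - sInf (renyiH n α '' {P | IsPMF n P ∧ RatioBdd n ρ P})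

/-- The closed-form expression for `c_α^{(∞)}(ρ)`, `α ∈ (0,1) ∪ (1,∞)`. -/
noncomputable def cInfinity (α ρ : ℝ) : ℝ :=
  (α - 1)⁻¹ * Real.log (1 + (1 + α * (ρ - 1) - ρ ^ α) / ((1 - α) * (ρ - 1)))
    - α / (α - 1) * Real.log (1 + (1 + α * (ρ - 1) - ρ ^ α) / ((1 - α) * (ρ ^ α - 1)))

/-- `v(α) := c_α^{(∞)}(2)`, with the continuous extension at `α = 1`. -/
noncomputable def vFun (α : ℝ) : ℝ :=
  if α = 1 then Real.log (2 / (Real.exp 1 * Real.log 2))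
  else Real.log ((α - 1) / ((2 : ℝ) ^ α - 2)) - α / (α - 1) * Real.log (α / ((2 : ℝ) ^ α - 1))

/-- `n*`: the maximal `i ∈ {1,…,m−1}` with `P i ≥ (m−i)⁻¹ ∑_{j=i+1}^n P j`. -/
noncomputable def nStar (n m : ℕ) (P : ℕ → ℝ) : ℕ :=
  sSup {i : ℕ | 1 ≤ i ∧ i ≤ m - 1 ∧
    ((m : ℝ) - (i : ℝ))⁻¹ * ∑ j ∈ Finset.Icc (i + 1) n, P j ≤ P i}

/-- The pmf of `X̃_m` on `{1,…,m}`, built from a nonincreasing pmf `P` on `{1,…,n}`. -/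
noncomputable def tildeX (n m : ℕ) (P : ℕ → ℝ) : ℕ → ℝ := fun i =>
  if P 1 < 1 / (m : ℝ) then 1 / (m : ℝ)
  else if i ≤ nStar n m P then P i
  else ((m : ℝ) - (nStar n m P : ℝ))⁻¹ * ∑ j ∈ Finset.Icc (nStar n m P + 1) n, P j

/-- The pmf of `Ỹ_m` on `{1,…,m}`. -/
def tildeY (n m : ℕ) (P : ℕ → ℝ) : ℕ → ℝ := fun i =>
  if i = 1 then ∑ j ∈ Finset.Icc 1 (n - m + 1), P j else P (n - m + i)

/-- The pmf of `f(X)`: `(push n f P) j = ∑_{i ∈ {1,…,n}, f i = j} P i`. -/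
def push (n : ℕ) (f : ℕ → ℕ) (P : ℕ → ℝ) : ℕ → ℝ := fun j =>
  ∑ i ∈ (Finset.Icc 1 n).filter (fun i => f i = j), P i

/-- The set `{1,…,n}^k` of source sequences of length `k`. -/
def seqSet (n k : ℕ) : Finset (Fin k → ℕ) := Fintype.piFinset fun _ => Finset.Icc 1 n

/-- Product (i.i.d.) probability of a sequence. -/
def prodP (k : ℕ) (P : ℕ → ℝ) (x : Fin k → ℕ) : ℝ := ∏ i, P (x i)

/-- `g` is a ranking function for the i.i.d. vector on `{1,…,n}^k` with marginal `P`: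
a bijection onto `{1,…,n^k}` which assigns smaller ranks to larger masses. -/
def IsRanking (n k : ℕ) (P : ℕ → ℝ) (g : (Fin k → ℕ) → ℕ) : Prop :=
  Set.BijOn g (↑(seqSet n k)) (Set.Icc 1 (n ^ k)) ∧
    ∀ x ∈ seqSet n k, ∀ y ∈ seqSet n k, prodP k P y < prodP k P x → g x < g y

/-- The `ρ`-th guessing moment `E[g(Z^k)^ρ]`. -/
noncomputable def gmoment (n k : ℕ) (P : ℕ → ℝ) (g : (Fin k → ℕ) → ℕ) (ρ : ℝ) : ℝ :=
  ∑ x ∈ seqSet n k, prodP k P x * (g x : ℝ) ^ ρ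

/-- Kraft inequality for a `D`-ary length function on `{1,…,n}^k`. -/
def Kraft (n k D : ℕ) (ℓ : (Fin k → ℕ) → ℕ) : Prop :=
  ∑ x ∈ seqSet n k, (D : ℝ) ^ (-(ℓ x : ℝ)) ≤ 1

/-- Scaled cumulant generating function `Λ_k(ρ)` of the codeword lengths (base-`D` log). -/
noncomputable def cgf (n k D : ℕ) (P : ℕ → ℝ) (ℓ : (Fin k → ℕ) → ℕ) (ρ : ℝ) : ℝ :=
  (1 / (k : ℝ)) * Real.logb D (∑ x ∈ seqSet n k, prodP k P x * (D : ℝ) ^ (ρ * (ℓ x : ℝ)))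

/-- `i_β` of Lemma 2. -/
noncomputable def iBeta (n : ℕ) (ρ β : ℝ) : ℕ := Nat.floor ((1 - (n : ℝ) * β) / ((ρ - 1) * β))

/-- The pmf `Q_β` of Lemma 2. -/
noncomputable def Qbeta (n : ℕ) (ρ β : ℝ) : ℕ → ℝ := fun j =>
  if j ≤ iBeta n ρ β then ρ * β
  else if j = iBeta n ρ β + 1 then
    1 - ((n : ℝ) + (iBeta n ρ β : ℝ) * ρ - (iBeta n ρ β : ℝ) - 1) * β
  else β

open Real Filter in
theorem stmt4 (ρ : ℝ) (hρ : 1 < ρ) :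
    Filter.Tendsto (fun α : ℝ => cInfinity α ρ) Filter.atTop (nhds (Real.log ρ)) := by
  have hρ0 : (0:ℝ) < ρ := lt_trans one_pos hρ
  have hρ1 : (0:ℝ) < ρ - 1 := by linarith
  have hlρ : 0 < Real.log ρ := Real.log_pos hρ
  -- basic limits
  have h1 : Tendsto (fun α : ℝ => α - 1) atTop atTop :=
    tendsto_atTop_add_const_right _ _ tendsto_id
  have hinv : Tendsto (fun α : ℝ => (α - 1)⁻¹) atTop (nhds 0) :=
    tendsto_inv_atTop_zero.comp h1
  have hpow1 : Tendsto (fun α : ℝ => ρ ^ (1 - α)) atTop (nhds 0) := by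
    have hb : Tendsto (fun α : ℝ => Real.log ρ * (1 - α)) atTop atBot := by
      apply Tendsto.const_mul_atBot hlρ
      exact (tendsto_atBot_add_const_left atTop (1:ℝ) tendsto_neg_atTop_atBot).congr fun x => (sub_eq_add_neg (1:ℝ) x).symm
    have := Real.tendsto_exp_atBot.comp hb
    refine this.congr fun α => ?_
    simp [Real.rpow_def_of_pos hρ0]
  have hpow2 : Tendsto (fun α : ℝ => ρ ^ (-α)) atTop (nhds 0) := by
    have hb : Tendsto (fun α : ℝ => Real.log ρ * (-α)) atTop atBot :=
      Tendsto.const_mul_atBot hlρ tendsto_neg_atTop_atBot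
    have := Real.tendsto_exp_atBot.comp hb
    refine this.congr fun α => ?_
    simp [Real.rpow_def_of_pos hρ0]
  have hlog1 : Tendsto (fun α : ℝ => Real.log (1 - ρ ^ (1 - α))) atTop (nhds 0) := by
    have h : Tendsto (fun α : ℝ => 1 - ρ ^ (1 - α)) atTop (nhds 1) := by
      simpa using tendsto_const_nhds.sub hpow1
    have := (Real.continuousAt_log one_ne_zero).tendsto.comp h
    simpa [Function.comp_def] using this
  have hlogdiv : Tendsto (fun α : ℝ => Real.log (α - 1) / (α - 1)) atTop (nhds 0) :=
    (Real.isLittleO_log_id_atTop.tendsto_div_nhds_zero).comp h1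
  have hratio : Tendsto (fun α : ℝ => α / (α - 1)) atTop (nhds 1) := by
    have h : Tendsto (fun α : ℝ => 1 + (α - 1)⁻¹) atTop (nhds 1) := by
      simpa using tendsto_const_nhds.add hinv
    refine h.congr' ?_
    filter_upwards [eventually_gt_atTop (1:ℝ)] with α hα
    have : α - 1 ≠ 0 := by linarith
    field_simp
    ring
  have hT2 : Tendsto (fun α : ℝ => (ρ ^ α - ρ) / (ρ ^ α - 1)) atTop (nhds 1) := by
    have hnum : Tendsto (fun α : ℝ => 1 - ρ * ρ ^ (-α)) atTop (nhds 1) := by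
      simpa using tendsto_const_nhds.sub (tendsto_const_nhds.mul hpow2)
    have hden : Tendsto (fun α : ℝ => 1 - ρ ^ (-α)) atTop (nhds 1) := by
      simpa using tendsto_const_nhds.sub hpow2
    have h := hnum.div hden one_ne_zero
    rw [div_one] at h
    refine h.congr' ?_
    filter_upwards [eventually_gt_atTop (0:ℝ)] with α hα
    have ha : (0:ℝ) < ρ ^ α := Real.rpow_pos_of_pos hρ0 α
    have ha1 : (1:ℝ) < ρ ^ α := Real.one_lt_rpow_iff_of_pos hρ0 |>.mpr (Or.inl ⟨hρ, hα⟩)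
    have hinvpow : ρ ^ (-α) = (ρ ^ α)⁻¹ := by rw [Real.rpow_neg hρ0.le]
    have hne : ρ ^ α - 1 ≠ 0 := by linarith
    have hane : ρ ^ α ≠ 0 := ha.ne'
    simp only [Pi.div_apply, hinvpow]
    field_simp
  have hT2full : Tendsto (fun α : ℝ => α / (α - 1) * ((ρ ^ α - ρ) / (ρ ^ α - 1)))
      atTop (nhds 1) := by simpa using hratio.mul hT2
  have hlogT2 : Tendsto (fun α : ℝ =>
      Real.log (α / (α - 1) * ((ρ ^ α - ρ) / (ρ ^ α - 1)))) atTop (nhds 0) := by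
    have := (Real.continuousAt_log one_ne_zero).tendsto.comp hT2full
    simpa [Function.comp_def] using this
  have hmain : Tendsto (fun α : ℝ =>
      Real.log ρ + ((α - 1)⁻¹ * Real.log ρ + (α - 1)⁻¹ * Real.log (1 - ρ ^ (1 - α))
        - Real.log (α - 1) / (α - 1) - (α - 1)⁻¹ * Real.log (ρ - 1))
        - α / (α - 1) * Real.log (α / (α - 1) * ((ρ ^ α - ρ) / (ρ ^ α - 1))))
      atTop (nhds (Real.log ρ)) := by
    have h : Tendsto (fun α : ℝ =>
        Real.log ρ + ((α - 1)⁻¹ * Real.log ρ + (α - 1)⁻¹ * Real.log (1 - ρ ^ (1 - α))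
          - Real.log (α - 1) / (α - 1) - (α - 1)⁻¹ * Real.log (ρ - 1))
          - α / (α - 1) * Real.log (α / (α - 1) * ((ρ ^ α - ρ) / (ρ ^ α - 1))))
        atTop (nhds (Real.log ρ + ((0:ℝ) * Real.log ρ + 0 * 0 - 0 - 0 * Real.log (ρ - 1)) - 1 * 0)) :=
      (tendsto_const_nhds.add
        ((((hinv.mul_const _).add (hinv.mul hlog1)).sub hlogdiv).sub (hinv.mul_const _))).sub
        (hratio.mul hlogT2)
    simpa using h
  refine hmain.congr' ?_
  filter_upwards [eventually_gt_atTop (1:ℝ)] with α hα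
  have hα1 : (0:ℝ) < α - 1 := by linarith
  have hα0 : (0:ℝ) < α := by linarith
  have ha1 : (1:ℝ) < ρ ^ α := Real.one_lt_rpow_iff_of_pos hρ0 |>.mpr (Or.inl ⟨hρ, hα0⟩)
  have hapos : (0:ℝ) < ρ ^ α := Real.rpow_pos_of_pos hρ0 α
  have hc1 : ρ ^ (1 - α) < 1 := Real.rpow_lt_one_of_one_lt_of_neg hρ (by linarith)
  have hcpos : (0:ℝ) < ρ ^ (1 - α) := Real.rpow_pos_of_pos hρ0 _
  have hρα : ρ < ρ ^ α := by
    calc ρ = ρ ^ (1:ℝ) := (Real.rpow_one ρ).symm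
    _ < ρ ^ α := Real.rpow_lt_rpow_left_iff hρ |>.mpr hα
  have hAc : ρ ^ α * ρ ^ (1 - α) = ρ := by
    rw [← Real.rpow_add hρ0]; norm_num
  have hsplit : ρ ^ α - ρ = ρ ^ α * (1 - ρ ^ (1 - α)) := by
    linear_combination hAc
  -- closed forms
  have hne1 : (1:ℝ) - α ≠ 0 := by linarith
  have hne2 : α - 1 ≠ 0 := hα1.ne'
  have hne3 : ρ ^ α - 1 ≠ 0 := by linarith
  have hne4 : ρ - 1 ≠ 0 := hρ1.ne'
  have e1 : 1 + (1 + α * (ρ - 1) - ρ ^ α) / ((1 - α) * (ρ - 1))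
      = (ρ ^ α - ρ) / ((α - 1) * (ρ - 1)) := by
    field_simp
    ring
  have e2 : 1 + (1 + α * (ρ - 1) - ρ ^ α) / ((1 - α) * (ρ ^ α - 1))
      = α / (α - 1) * ((ρ ^ α - ρ) / (ρ ^ α - 1)) := by
    field_simp
    ring
  have hcc : (0:ℝ) < 1 - ρ ^ (1 - α) := by linarith
  have l1 : Real.log (ρ ^ α - ρ) = α * Real.log ρ + Real.log (1 - ρ ^ (1 - α)) := by
    rw [hsplit, Real.log_mul hapos.ne' hcc.ne', Real.log_rpow hρ0]
  have l0 : Real.log ((ρ ^ α - ρ) / ((α - 1) * (ρ - 1)))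
      = α * Real.log ρ + Real.log (1 - ρ ^ (1 - α)) - (Real.log (α - 1) + Real.log (ρ - 1)) := by
    rw [Real.log_div (by linarith) (mul_ne_zero hne2 hne4), l1,
      Real.log_mul hne2 hne4]
  have key : cInfinity α ρ
      = Real.log ρ + ((α - 1)⁻¹ * Real.log ρ + (α - 1)⁻¹ * Real.log (1 - ρ ^ (1 - α))
        - Real.log (α - 1) / (α - 1) - (α - 1)⁻¹ * Real.log (ρ - 1))
        - α / (α - 1) * Real.log (α / (α - 1) * ((ρ ^ α - ρ) / (ρ ^ α - 1))) := by
    rw [cInfinity, e1, e2, l0]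
    field_simp
    ring
  exact key.symm
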